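/- With the notation and hypotheses of the context, for every continuously differentiable v : [-L,L] → ℝ with v(x) ≥ -H for all x, one has (1/2) ∫_{-L}^{L} ∫_{-H-d}^{v(x)} σ(x,z) |∇h_v(x,z)|² dz dx ≤ (d+1) σ_max ∫_{-L}^{L} [ (3/2)(m₁ + m₂ v(x)²) + m₃ v'(x)² ] dx, where |∇h_v(x,z)|² := (∂_x h_i(x,z,v(x)) + ∂_w h_i(x,z,v(x)) v'(x))² + (∂_z h_i(x,z,v(x)))², with i = 1 for z ∈ (-H-d,-H) and i = 2 for z ∈ (-H, v(x)). -/

import Mathlib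

open MeasureTheory Set

/-- Key pointwise algebraic bound: `(p+qc)² + r² ≤ 2A + 2Bc²` when
`|p|+|r| ≤ √A` and `|q| ≤ √B`. -/
lemma stmt6_key (p q r c A B : ℝ) (hA : 0 ≤ A) (hB : 0 ≤ B)
    (h1 : |p| + |r| ≤ Real.sqrt A) (h2 : |q| ≤ Real.sqrt B) :
    (p + q * c) ^ 2 + r ^ 2 ≤ 2 * A + 2 * B * c ^ 2 := by
  have hA' : (Real.sqrt A) ^ 2 = A := Real.sq_sqrt hA
  have hB' : (Real.sqrt B) ^ 2 = B := Real.sq_sqrt hB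
  have hpr : p ^ 2 + r ^ 2 ≤ A := by
    nlinarith [abs_nonneg p, abs_nonneg r, sq_abs p, sq_abs r, Real.sqrt_nonneg A,
      mul_nonneg (abs_nonneg p) (abs_nonneg r)]
  have hq : q ^ 2 ≤ B := by
    nlinarith [sq_abs q, Real.sqrt_nonneg B, abs_nonneg q]
  nlinarith [sq_nonneg (p - q * c), mul_le_mul_of_nonneg_right hq (sq_nonneg c), hpr]

/-- The Dirichlet-energy bound for the boundary-data extension `h_v` from the proof of
Lemma 3.4: for `v ≥ -H`,
`(1/2) ∫_D ∫_{-H-d}^{v(x)} σ |∇h_v|² dz dx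
  ≤ (d+1) σ_max ∫_D [ (3/2)(m₁ + m₂ v²) + m₃ (v')² ] dx`,
where `|∇h_v|² = (∂_x h_i + ∂_w h_i v')² + (∂_z h_i)²`, with `i = 1` for
`z ∈ (-H-d,-H)` and `i = 2` for `z ∈ (-H, v(x))`. -/
theorem stmt6 (L H d σmax m₁ m₂ m₃ : ℝ)
    (hL : 0 < L) (hH : 0 < H) (hd : 0 < d) (hσmax : 0 < σmax)
    (hm₁ : 0 < m₁) (hm₂ : 0 < m₂) (hm₃ : 0 < m₃)
    (σ : ℝ → ℝ → ℝ)
    (hσmeas : Measurable (Function.uncurry σ))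
    (hσ : ∀ x ∈ Icc (-L) L, ∀ z ∈ Ici (-H - d), 0 ≤ σ x z ∧ σ x z ≤ σmax)
    (h₁x h₁z h₁w h₂x h₂z h₂w : ℝ → ℝ → ℝ → ℝ)
    (hb₁ : ∀ x ∈ Icc (-L) L, ∀ z ∈ Icc (-H - d) (-H), ∀ w ∈ Ici (-H),
      |h₁x x z w| + |h₁z x z w| ≤ Real.sqrt (m₁ + m₂ * w ^ 2) ∧
      |h₁w x z w| ≤ Real.sqrt m₃)
    (hb₂ : ∀ x ∈ Icc (-L) L, ∀ w ∈ Ici (-H), ∀ z ∈ Icc (-H) w,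
      |h₂x x z w| + |h₂z x z w| ≤ Real.sqrt ((m₁ + m₂ * w ^ 2) / (H + w)) ∧
      |h₂w x z w| ≤ Real.sqrt (m₃ / (H + w)))
    (v v' : ℝ → ℝ)
    (hv : ∀ x ∈ Icc (-L) L, HasDerivWithinAt v (v' x) (Icc (-L) L) x)
    (hv'c : ContinuousOn v' (Icc (-L) L))
    (hvH : ∀ x ∈ Icc (-L) L, -H ≤ v x) :
    (1 / 2) * ∫ x in (-L)..L, (∫ z in (-H - d)..(v x),
        σ x z * (if z ≤ -H then
            (h₁x x z (v x) + h₁w x z (v x) * v' x) ^ 2 + (h₁z x z (v x)) ^ 2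
          else
            (h₂x x z (v x) + h₂w x z (v x) * v' x) ^ 2 + (h₂z x z (v x)) ^ 2))
      ≤ (d + 1) * σmax *
          ∫ x in (-L)..L, ((3 / 2) * (m₁ + m₂ * (v x) ^ 2) + m₃ * (v' x) ^ 2) := by
  have hLL : (-L : ℝ) ≤ L := by linarith
  -- the inner integrand
  set f : ℝ → ℝ → ℝ := fun x z =>
    σ x z * (if z ≤ -H then
        (h₁x x z (v x) + h₁w x z (v x) * v' x) ^ 2 + (h₁z x z (v x)) ^ 2
      else
        (h₂x x z (v x) + h₂w x z (v x) * v' x) ^ 2 + (h₂z x z (v x)) ^ 2) with hf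
  set G : ℝ → ℝ := fun x => 2 * (d + 1) * σmax * ((m₁ + m₂ * (v x) ^ 2) + m₃ * (v' x) ^ 2)
    with hG
  have hvc : ContinuousOn v (Icc (-L) L) := fun x hx => (hv x hx).continuousWithinAt
  -- f is nonnegative on the relevant region
  have hf0 : ∀ x ∈ Icc (-L) L, ∀ z ∈ Icc (-H - d) (v x), 0 ≤ f x z := by
    intro x hx z hz
    have hσ0 : 0 ≤ σ x z := (hσ x hx z hz.1).1
    simp only [hf]
    have : (0:ℝ) ≤ (if z ≤ -H then
        (h₁x x z (v x) + h₁w x z (v x) * v' x) ^ 2 + (h₁z x z (v x)) ^ 2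
      else
        (h₂x x z (v x) + h₂w x z (v x) * v' x) ^ 2 + (h₂z x z (v x)) ^ 2) := by
      split <;> positivity
    exact mul_nonneg hσ0 this
  -- the inner integral bound
  have hinner : ∀ x ∈ Icc (-L) L, (∫ z in (-H - d)..(v x), f x z) ≤ G x := by
    intro x hx
    have hw : -H ≤ v x := hvH x hx
    set w := v x with hwx
    set c := v' x with hcx
    have hab : -H - d ≤ w := by linarith
    have hM0 : (0:ℝ) ≤ m₁ + m₂ * w ^ 2 := by positivity
    set C1 : ℝ := σmax * (2 * (m₁ + m₂ * w ^ 2) + 2 * m₃ * c ^ 2) with hC1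
    set C2 : ℝ := σmax * (2 * ((m₁ + m₂ * w ^ 2) / (H + w)) + 2 * (m₃ / (H + w)) * c ^ 2)
      with hC2
    set g : ℝ → ℝ := fun z => if z ≤ -H then C1 else C2 with hg
    have hg1 : IntegrableOn (fun _ : ℝ => C1) (Ioc (-H - d) (-H)) volume :=
      integrableOn_const measure_Ioc_lt_top.ne
    have hg1' : IntegrableOn g (Ioc (-H - d) (-H)) volume := by
      refine hg1.congr_fun (fun z hz => ?_) measurableSet_Ioc
      simp only [hg, if_pos hz.2]
    have hg2 : IntegrableOn (fun _ : ℝ => C2) (Ioc (-H) w) volume :=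
      integrableOn_const measure_Ioc_lt_top.ne
    have hg2' : IntegrableOn g (Ioc (-H) w) volume := by
      refine hg2.congr_fun (fun z hz => ?_) measurableSet_Ioc
      simp only [hg, if_neg (not_le.2 hz.1)]
    have hsplit : Ioc (-H - d) (-H) ∪ Ioc (-H) w = Ioc (-H - d) w :=
      Ioc_union_Ioc_eq_Ioc (by linarith) hw
    have hgint : IntegrableOn g (Ioc (-H - d) w) volume := by
      rw [← hsplit]; exact hg1'.union hg2'
    rw [intervalIntegral.integral_of_le hab]
    have step1 : (∫ z in Ioc (-H - d) w, f x z) ≤ ∫ z in Ioc (-H - d) w, g z := by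
      apply integral_mono_of_nonneg
      · filter_upwards [ae_restrict_mem measurableSet_Ioc] with z hz
        exact hf0 x hx z ⟨hz.1.le, hz.2⟩
      · exact hgint
      · filter_upwards [ae_restrict_mem measurableSet_Ioc] with z hz
        have hz1 : -H - d ≤ z := hz.1.le
        have hσb := hσ x hx z hz1
        simp only [hf, hg]
        by_cases hzH : z ≤ -H
        · simp only [if_pos hzH, hC1]
          have hb := hb₁ x hx z ⟨hz1, hzH⟩ w hw
          have hkey := stmt6_key (h₁x x z w) (h₁w x z w) (h₁z x z w) c
            (m₁ + m₂ * w ^ 2) m₃ hM0 hm₃.le hb.1 hb.2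
          exact mul_le_mul hσb.2 hkey (by positivity) hσmax.le
        · simp only [if_neg hzH, hC2]
          push_neg at hzH
          have hzw : z ≤ w := hz.2
          have hHw : 0 < H + w := by linarith
          have hb := hb₂ x hx w hw z ⟨by linarith, hzw⟩
          have hkey := stmt6_key (h₂x x z w) (h₂w x z w) (h₂z x z w) c
            ((m₁ + m₂ * w ^ 2) / (H + w)) (m₃ / (H + w))
            (div_nonneg hM0 hHw.le) (div_nonneg hm₃.le hHw.le) hb.1 hb.2
          exact mul_le_mul hσb.2 hkey (by positivity) hσmax.le
    have step2 : (∫ z in Ioc (-H - d) w, g z) ≤ G x := by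
      rw [← hsplit, setIntegral_union (Ioc_disjoint_Ioc_of_le le_rfl) measurableSet_Ioc hg1' hg2']
      have e1 : (∫ z in Ioc (-H - d) (-H), g z) = d * C1 := by
        have ec : (∫ z in Ioc (-H - d) (-H), g z) = ∫ _z in Ioc (-H - d) (-H), C1 :=
          setIntegral_congr_fun measurableSet_Ioc
            (fun z (hz : z ∈ Ioc (-H - d) (-H)) => by simp only [hg, if_pos hz.2])
        rw [ec, setIntegral_const, measureReal_def, Real.volume_Ioc, smul_eq_mul,
          show -H - (-H - d) = d by ring, ENNReal.toReal_ofReal hd.le]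
      have e2 : (∫ z in Ioc (-H) w, g z) = (w + H) * C2 := by
        have ec : (∫ z in Ioc (-H) w, g z) = ∫ _z in Ioc (-H) w, C2 :=
          setIntegral_congr_fun measurableSet_Ioc
            (fun z (hz : z ∈ Ioc (-H) w) => by simp only [hg, if_neg (not_le.2 hz.1)])
        rw [ec, setIntegral_const, measureReal_def, Real.volume_Ioc, smul_eq_mul,
          show w - -H = w + H by ring, ENNReal.toReal_ofReal (by linarith)]
      rw [e1, e2]
      have h2 : (w + H) * C2 ≤ 2 * σmax * ((m₁ + m₂ * w ^ 2) + m₃ * c ^ 2) := by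
        rcases eq_or_lt_of_le (show (0:ℝ) ≤ H + w by linarith) with heq | hlt
        · rw [hC2, show w + H = 0 by linarith, zero_mul]
          positivity
        · have : (w + H) * C2 = 2 * σmax * ((m₁ + m₂ * w ^ 2) + m₃ * c ^ 2) := by
            rw [hC2]
            field_simp
            ring
          rw [this]
      have h1 : d * C1 = 2 * d * σmax * ((m₁ + m₂ * w ^ 2) + m₃ * c ^ 2) := by
        rw [hC1]; ring
      have hGx : G x = 2 * (d + 1) * σmax * ((m₁ + m₂ * w ^ 2) + m₃ * c ^ 2) := by
        simp only [hG]; rfl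
      rw [hGx, h1]
      nlinarith [h2]
    exact step1.trans step2
  -- nonnegativity of the inner integral
  have hF0 : ∀ x ∈ Icc (-L) L, 0 ≤ ∫ z in (-H - d)..(v x), f x z := by
    intro x hx
    exact intervalIntegral.integral_nonneg (by linarith [hvH x hx])
      (fun z hz => hf0 x hx z hz)
  -- continuity / integrability of G
  have hGC : ContinuousOn G (Icc (-L) L) := by
    simp only [hG]
    exact continuousOn_const.mul ((continuousOn_const.add
      (continuousOn_const.mul (hvc.pow 2))).add (continuousOn_const.mul (hv'c.pow 2)))
  have hGI : IntervalIntegrable G volume (-L) L :=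
    ContinuousOn.intervalIntegrable (by rw [Set.uIcc_of_le hLL]; exact hGC)
  -- outer comparison
  have houter : (∫ x in (-L)..L, ∫ z in (-H - d)..(v x), f x z)
      ≤ ∫ x in (-L)..L, G x := by
    rw [intervalIntegral.integral_of_le hLL, intervalIntegral.integral_of_le hLL]
    apply integral_mono_of_nonneg
    · filter_upwards [ae_restrict_mem measurableSet_Ioc] with x hx
      exact hF0 x ⟨hx.1.le, hx.2⟩
    · exact hGI.1
    · filter_upwards [ae_restrict_mem measurableSet_Ioc] with x hx
      exact hinner x ⟨hx.1.le, hx.2⟩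
  -- compute ∫ G and compare with final RHS
  have hGrw : (∫ x in (-L)..L, G x)
      = 2 * (d + 1) * σmax * ∫ x in (-L)..L, ((m₁ + m₂ * (v x) ^ 2) + m₃ * (v' x) ^ 2) := by
    rw [← intervalIntegral.integral_const_mul]
  have hmid : ContinuousOn (fun x => (m₁ + m₂ * (v x) ^ 2) + m₃ * (v' x) ^ 2) (Icc (-L) L) :=
    (continuousOn_const.add (continuousOn_const.mul (hvc.pow 2))).add
      (continuousOn_const.mul (hv'c.pow 2))
  have hrhsC : ContinuousOn (fun x => (3 / 2) * (m₁ + m₂ * (v x) ^ 2) + m₃ * (v' x) ^ 2)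
      (Icc (-L) L) :=
    (continuousOn_const.mul (continuousOn_const.add (continuousOn_const.mul (hvc.pow 2)))).add
      (continuousOn_const.mul (hv'c.pow 2))
  have hmono : (∫ x in (-L)..L, ((m₁ + m₂ * (v x) ^ 2) + m₃ * (v' x) ^ 2))
      ≤ ∫ x in (-L)..L, ((3 / 2) * (m₁ + m₂ * (v x) ^ 2) + m₃ * (v' x) ^ 2) := by
    apply intervalIntegral.integral_mono_on hLL
    · exact ContinuousOn.intervalIntegrable (by rw [Set.uIcc_of_le hLL]; exact hmid)
    · exact ContinuousOn.intervalIntegrable (by rw [Set.uIcc_of_le hLL]; exact hrhsC)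
    · intro x hx
      have : (0:ℝ) ≤ m₁ + m₂ * (v x) ^ 2 := by positivity
      linarith
  calc (1 / 2) * ∫ x in (-L)..L, (∫ z in (-H - d)..(v x), f x z)
      ≤ (1 / 2) * ∫ x in (-L)..L, G x := by linarith [houter]
    _ = (d + 1) * σmax * ∫ x in (-L)..L, ((m₁ + m₂ * (v x) ^ 2) + m₃ * (v' x) ^ 2) := by
        rw [hGrw]; ring
    _ ≤ (d + 1) * σmax *
          ∫ x in (-L)..L, ((3 / 2) * (m₁ + m₂ * (v x) ^ 2) + m₃ * (v' x) ^ 2) := by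
        apply mul_le_mul_of_nonneg_left hmono (by positivity)
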